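/- arXiv:2205.06637 — 3 statements merged into one kernel-verified Lean document; each statement's English description precedes it below -/
import Mathlib

section
/- Consider a finite game: a finite nonempty index type I of players, for each player i a finite nonempty strategy type A i, profiles Π i, A i, and cost functions c : I → (Π i, A i) → ℝ. Say profile d' is obtained from d by a unilateral improvement step of player i if d' = Function.update d i a for some a : A i and c i d' < c i d. If there is no infinite sequence of profiles d : ℕ → (Π i, A i) in which each d(n+1) is obtained from d(n) by a unilateral improvement step of some player, then there exists a Nash equilibrium: a profile d* such that for every player i and every strategy a : A i, c i d* ≤ c i (Function.update d* i a). -/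
/-- A finite game with the finite improvement property (no infinite sequence of
unilateral improvement steps) has a Nash equilibrium. -/
theorem fip_implies_nash_equilibrium
    {I : Type*} [Finite I] [Nonempty I] [DecidableEq I]
    (A : I → Type*) [∀ i, Finite (A i)] [∀ i, Nonempty (A i)]
    (c : I → (∀ i, A i) → ℝ)
    (hFIP : ¬ ∃ d : ℕ → ∀ i, A i, ∀ n : ℕ, ∃ (i : I) (a : A i),
      d (n + 1) = Function.update (d n) i a ∧ c i (d (n + 1)) < c i (d n)) :
    ∃ dstar : ∀ i, A i, ∀ (i : I) (a : A i),
      c i dstar ≤ c i (Function.update dstar i a) := by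
  by_contra h
  push_neg at h
  choose i a ha using h
  set f : (∀ j, A j) → (∀ j, A j) := fun d => Function.update d (i d) (a d) with hfdef
  apply hFIP
  refine ⟨fun n => f^[n] (Classical.arbitrary _), fun n => ?_⟩
  refine ⟨i (f^[n] (Classical.arbitrary _)), a (f^[n] (Classical.arbitrary _)), ?_, ?_⟩ <;>
    simp only [Function.iterate_succ_apply']
  · rfl
  exact ha _
end

section
/- Consider a finite game: a finite index type I of players, for each player i a finite strategy type A i, profiles Π i, A i, and cost functions c : I → (Π i, A i) → ℝ. Suppose Φ : (Π i, A i) → ℝ is an ordinal potential: for every profile d, every player i, and every a : A i, if c i (Function.update d i a) < c i d then Φ (Function.update d i a) < Φ d. Then there is no infinite sequence of profiles d : ℕ → (Π i, A i) in which each d(n+1) is obtained from d(n) by a unilateral improvement step of some player (i.e., d(n+1) = Function.update (d n) i a with c i (d(n+1)) < c i (d n)). In particular, the game has the finite improvement property. -/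
/-- A finite game admitting an ordinal potential has no infinite sequence of
unilateral improvement steps; i.e., it has the finite improvement property. -/
theorem ordinal_potential_implies_fip
    {I : Type*} [Finite I] [DecidableEq I]
    (A : I → Type*) [∀ i, Finite (A i)]
    (c : I → (∀ i, A i) → ℝ) (Φ : (∀ i, A i) → ℝ)
    (hΦ : ∀ (d : ∀ i, A i) (i : I) (a : A i),
      c i (Function.update d i a) < c i d → Φ (Function.update d i a) < Φ d) :
    ¬ ∃ d : ℕ → ∀ i, A i, ∀ n : ℕ, ∃ (i : I) (a : A i),
      d (n + 1) = Function.update (d n) i a ∧ c i (d (n + 1)) < c i (d n) := by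
  rintro ⟨d, hd⟩
  have hmono : StrictAnti (fun n => Φ (d n)) := by
    apply strictAnti_nat_of_succ_lt
    intro n
    obtain ⟨i, a, heq, hlt⟩ := hd n
    have := hΦ (d n) i a (heq ▸ hlt)
    simpa [heq] using this
  have hinj : Function.Injective (fun n => Φ (d n)) := hmono.injective
  have hinj' : Function.Injective d := fun m n h => hinj (by simp [h])
  haveI := Finite.of_injective d hinj'
  exact (instInfiniteNat).not_finite (Finite.of_injective d hinj')
end

section
/- Consider a finite game with index type I, strategy types A i, profiles S = Π i, A i with S finite, costs c : I → S → ℝ, and an ordinal potential Φ : S → ℝ (every unilateral improvement step strictly decreases Φ). Then along any improvement path d : Fin (n+1) → S, in which each d(k+1) is obtained from d(k) by a unilateral improvement step, all visited profiles are pairwise distinct; consequently the path length satisfies n + 1 ≤ Fintype.card S. -/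
/-- In a finite game with an ordinal potential, all profiles along an improvement
path are pairwise distinct, so the path length is bounded by the number of
profiles. -/
theorem improvement_path_injective_and_bounded
    {I : Type*} [Fintype I] [DecidableEq I]
    (A : I → Type*) [∀ i, Fintype (A i)]
    (c : I → (∀ i, A i) → ℝ) (Φ : (∀ i, A i) → ℝ)
    (hΦ : ∀ (d : ∀ i, A i) (i : I) (a : A i),
      c i (Function.update d i a) < c i d → Φ (Function.update d i a) < Φ d)
    (n : ℕ) (d : Fin (n + 1) → ∀ i, A i)
    (hstep : ∀ k : Fin n, ∃ (i : I) (a : A i),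
      d k.succ = Function.update (d k.castSucc) i a ∧
      c i (d k.succ) < c i (d k.castSucc)) :
    Function.Injective d ∧ n + 1 ≤ Fintype.card (∀ i, A i) := by
  have hanti : StrictAnti (fun k => Φ (d k)) := by
    have : StrictMono (fun k => -Φ (d k)) := by
      rw [Fin.strictMono_iff_lt_succ]
      intro k
      obtain ⟨i, a, heq, hlt⟩ := hstep k
      have := hΦ (d k.castSucc) i a (heq ▸ hlt)
      simp only [heq]
      linarith
    intro a b hab
    have := this hab
    dsimp at this ⊢
    linarith
  have hinj : Function.Injective d := by
    intro a b hab
    exact hanti.injective (by simp [hab])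
  exact ⟨hinj, by simpa using Fintype.card_le_of_injective d hinj⟩
end
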